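/- arXiv:1112.5366 — 2 statements merged into one kernel-verified Lean document; each statement's English description precedes it below -/
import Mathlib

section
/- Let ψ, φ, γ ∈ ℂ[[t]] be formal power series satisfying the functional equation γ·φ = φ + φ′·ψ in ℂ[[t]] (φ′ the formal derivative; this is the paper's condition γ = 1 + (ln φ)′ψ), and fix h ∈ ℂ. On A = ℂ[x⁰,x¹,x²,x³], set A_op := ih·∂₀ and define x̂^j := x^j∘φ(A_op) for j = 1,2,3 and x̂⁰ := x⁰∘ψ(A_op) + ih·(Σ_{k=1}^{3} x^k∘∂_k)∘γ(A_op). Then [x̂⁰, x̂^j] = ih·x̂^j and [x̂^j, x̂^k] = 0 for all j,k ∈ {1,2,3}. -/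
open MvPolynomial

noncomputable section

/-- The multiplication-by-`x^μ` operator on `ℂ[x⁰,x¹,x²,x³]`. -/
def Xop (μ : Fin 4) : Module.End ℂ (MvPolynomial (Fin 4) ℂ) :=
  LinearMap.mulLeft ℂ (X μ)

/-- The partial-derivative operator `∂_μ` on `ℂ[x⁰,x¹,x²,x³]`. -/
def Dop (μ : Fin 4) : Module.End ℂ (MvPolynomial (Fin 4) ℂ) :=
  (pderiv μ).toLinearMap

/-- The operator `Σ_{n≥0} g n • ∂₀ⁿ` on `ℂ[x⁰,x¹,x²,x³]`; it is well defined since `∂₀` is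
locally nilpotent on polynomials (on the monomial `x^m` only the terms with `n ≤ m 0` are
nonzero, so the series reduces to the indicated finite sum on each basis monomial). -/
def seriesOp (g : ℕ → ℂ) : Module.End ℂ (MvPolynomial (Fin 4) ℂ) :=
  (basisMonomials (Fin 4) ℂ).constr ℂ fun m : Fin 4 →₀ ℕ =>
    ∑ n ∈ Finset.range (m 0 + 1), g n • (Dop 0 ^ n) (monomial m 1)

/-- For a formal power series `g = Σₙ gₙtⁿ ∈ ℂ[[t]]`, the operator
`g(A_op) := Σₙ gₙ(ih)ⁿ∂₀ⁿ`, where `A_op = ih·∂₀`. -/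
def opOf (h : ℂ) (g : PowerSeries ℂ) : Module.End ℂ (MvPolynomial (Fin 4) ℂ) :=
  seriesOp fun n => PowerSeries.coeff n g * (Complex.I * h) ^ n

-- ## auxiliary lemmas

lemma Dop_monomial (μ : Fin 4) (m : Fin 4 →₀ ℕ) (c : ℂ) :
    Dop μ (monomial m c) = monomial (m - Finsupp.single μ 1) (c * m μ) := by
  simp [Dop]

lemma Dpow_monomial (k : ℕ) (m : Fin 4 →₀ ℕ) (c : ℂ) :
    ∃ c' : ℂ, (Dop 0 ^ k) (monomial m c) = monomial (m - Finsupp.single 0 k) c' := by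
  induction k with
  | zero => exact ⟨c, by simp⟩
  | succ k ih =>
    obtain ⟨c', hc⟩ := ih
    refine ⟨c' * (((m - Finsupp.single 0 k) : Fin 4 →₀ ℕ) 0), ?_⟩
    rw [pow_succ', Module.End.mul_apply, hc, Dop_monomial]
    congr 1
    rw [tsub_tsub, ← Finsupp.single_add]

lemma Dpow_zero_of_lt {n : ℕ} {m : Fin 4 →₀ ℕ} (c : ℂ) (hn : m 0 < n) :
    (Dop 0 ^ n) (monomial m c) = 0 := by
  induction n generalizing m c with
  | zero => omega
  | succ n ih =>
    rw [pow_succ, Module.End.mul_apply, Dop_monomial]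
    rcases Nat.eq_zero_or_pos (m 0) with h0 | h0
    · rw [h0]; simp
    · apply ih
      rw [Finsupp.tsub_apply, Finsupp.single_eq_same]
      omega

lemma seriesOp_apply (cf : ℕ → ℂ) (m : Fin 4 →₀ ℕ) (c : ℂ) :
    seriesOp cf (monomial m c) =
      ∑ n ∈ Finset.range (m 0 + 1), cf n • (Dop 0 ^ n) (monomial m c) := by
  have hb : (basisMonomials (Fin 4) ℂ) m = monomial m 1 :=
    congrFun (coe_basisMonomials _ _) m
  have h1 : seriesOp cf (monomial m 1) =
      ∑ n ∈ Finset.range (m 0 + 1), cf n • (Dop 0 ^ n) (monomial m 1) := by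
    rw [← hb]; exact Module.Basis.constr_basis _ _ _ _
  calc seriesOp cf (monomial m c) = c • seriesOp cf (monomial m 1) := by
        rw [← map_smul]; congr 1; rw [smul_monomial, smul_eq_mul, mul_one]
    _ = _ := by
        rw [h1, Finset.smul_sum]
        refine Finset.sum_congr rfl fun n _ => ?_
        rw [smul_comm, ← map_smul, smul_monomial, smul_eq_mul, mul_one]

lemma seriesOp_apply_of_le (cf : ℕ → ℂ) (m : Fin 4 →₀ ℕ) (c : ℂ) {N : ℕ} (hN : m 0 ≤ N) :
    seriesOp cf (monomial m c) =
      ∑ n ∈ Finset.range (N + 1), cf n • (Dop 0 ^ n) (monomial m c) := by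
  rw [seriesOp_apply]
  apply Finset.sum_subset
  · exact Finset.range_subset_range.2 (by omega)
  · intro n hn hn'
    rw [Finset.mem_range] at hn hn'
    rw [Dpow_zero_of_lt c (by omega), smul_zero]

lemma seriesOp_Dpow (cf : ℕ → ℂ) (k : ℕ) (m : Fin 4 →₀ ℕ) (c : ℂ) :
    seriesOp cf ((Dop 0 ^ k) (monomial m c)) =
      ∑ n ∈ Finset.range (m 0 + 1), cf n • (Dop 0 ^ (n + k)) (monomial m c) := by
  obtain ⟨c', hc⟩ := Dpow_monomial k m c
  rw [hc, seriesOp_apply_of_le cf _ c'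
    (show ((m - Finsupp.single 0 k) : Fin 4 →₀ ℕ) 0 ≤ m 0 by
      rw [Finsupp.tsub_apply, Finsupp.single_eq_same]; omega)]
  refine Finset.sum_congr rfl fun n _ => ?_
  rw [← hc, ← Module.End.mul_apply, ← pow_add]

lemma end_ext {f g : Module.End ℂ (MvPolynomial (Fin 4) ℂ)}
    (hfg : ∀ m : Fin 4 →₀ ℕ, f (monomial m 1) = g (monomial m 1)) : f = g := by
  apply Module.Basis.ext (basisMonomials (Fin 4) ℂ)
  intro m
  rw [show (basisMonomials (Fin 4) ℂ) m = monomial m 1 from congrFun (coe_basisMonomials _ _) m]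
  exact hfg m

lemma opOf_add (h : ℂ) (f g : PowerSeries ℂ) :
    opOf h (f + g) = opOf h f + opOf h g := by
  apply end_ext; intro m
  simp only [opOf, LinearMap.add_apply, seriesOp_apply, map_add, add_mul, add_smul,
    Finset.sum_add_distrib]

lemma opOf_eq (h : ℂ) (u : PowerSeries ℂ) :
    opOf h u = seriesOp (fun n => PowerSeries.coeff n u * (Complex.I * h) ^ n) := rfl

lemma opOf_mul (h : ℂ) (f g : PowerSeries ℂ) :
    opOf h (f * g) = opOf h f * opOf h g := by
  apply end_ext; intro m
  set N := m 0 with hN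
  set F : ℕ × ℕ → MvPolynomial (Fin 4) ℂ := fun p =>
    ((PowerSeries.coeff p.1 f * (Complex.I * h) ^ p.1) *
      (PowerSeries.coeff p.2 g * (Complex.I * h) ^ p.2)) •
      (Dop 0 ^ (p.1 + p.2)) (monomial m 1) with hF
  have hR : (opOf h f * opOf h g) (monomial m 1)
      = ∑ n ∈ Finset.range (N + 1), ∑ k ∈ Finset.range (N + 1), F (k, n) := by
    rw [Module.End.mul_apply, opOf_eq h f, opOf_eq h g, seriesOp_apply, map_sum]
    refine Finset.sum_congr rfl fun n _ => ?_
    rw [map_smul, seriesOp_Dpow, Finset.smul_sum]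
    refine Finset.sum_congr rfl fun k _ => ?_
    rw [smul_smul]
    simp only [hF]
    rw [mul_comm (PowerSeries.coeff n g * (Complex.I * h) ^ n)]
  have hL : opOf h (f * g) (monomial m 1)
      = ∑ l ∈ Finset.range (N + 1), ∑ p ∈ Finset.HasAntidiagonal.antidiagonal l, F p := by
    rw [opOf_eq, seriesOp_apply]
    refine Finset.sum_congr rfl fun l _ => ?_
    rw [PowerSeries.coeff_mul, Finset.sum_mul, Finset.sum_smul]
    refine Finset.sum_congr rfl fun p hp => ?_
    rw [Finset.HasAntidiagonal.mem_antidiagonal] at hp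
    simp only [hF]
    rw [← hp]
    congr 1
    ring
  rw [hL, hR]
  have hdisj : (↑(Finset.range (N + 1)) : Set ℕ).PairwiseDisjoint
      (fun l => Finset.HasAntidiagonal.antidiagonal l) := by
    intro a _ b _ hab
    apply Finset.disjoint_left.2
    intro p hpa hpb
    rw [Finset.HasAntidiagonal.mem_antidiagonal] at hpa hpb
    exact hab (by omega)
  rw [← Finset.sum_biUnion hdisj]
  have hprod : ∑ n ∈ Finset.range (N + 1), ∑ k ∈ Finset.range (N + 1), F (k, n)
      = ∑ p ∈ Finset.range (N + 1) ×ˢ Finset.range (N + 1), F p := by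
    rw [Finset.sum_product]
    exact Finset.sum_comm.trans (by simp)
  rw [hprod]
  apply Finset.sum_subset
  · intro p hp
    simp only [Finset.mem_biUnion, Finset.mem_range, Finset.HasAntidiagonal.mem_antidiagonal] at hp
    obtain ⟨l, hl, hpl⟩ := hp
    simp only [Finset.mem_product, Finset.mem_range]
    omega
  · intro p hp hnp
    have hgt : N < p.1 + p.2 := by
      by_contra hc
      exact hnp (Finset.mem_biUnion.2 ⟨p.1 + p.2, Finset.mem_range.2 (by omega),
        Finset.HasAntidiagonal.mem_antidiagonal.2 rfl⟩)
    simp only [hF]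
    rw [Dpow_zero_of_lt _ hgt, smul_zero]

lemma Xop_monomial (μ : Fin 4) (m : Fin 4 →₀ ℕ) (c : ℂ) :
    Xop μ (monomial m c) = monomial (m + Finsupp.single μ 1) c := by
  rw [Xop, LinearMap.mulLeft_apply, X, monomial_mul, one_mul, add_comm]

/-- Generic commutation of `opOf` with an operator commuting with `∂₀` and
preserving the `x⁰`-degree of monomials. -/
lemma opOf_comm (h : ℂ) (g : PowerSeries ℂ) (T : Module.End ℂ (MvPolynomial (Fin 4) ℂ))
    (hc : Commute (Dop 0) T)
    (hm : ∀ m : Fin 4 →₀ ℕ, ∃ (m' : Fin 4 →₀ ℕ) (c' : ℂ),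
      T (monomial m 1) = monomial m' c' ∧ m' 0 ≤ m 0) :
    opOf h g * T = T * opOf h g := by
  apply end_ext; intro m
  obtain ⟨m', c', hT, hm'⟩ := hm m
  rw [Module.End.mul_apply, Module.End.mul_apply, hT, opOf_eq,
    seriesOp_apply_of_le _ _ _ hm', seriesOp_apply, map_sum]
  refine Finset.sum_congr rfl fun n _ => ?_
  rw [map_smul, ← hT, ← Module.End.mul_apply, ← Module.End.mul_apply,
    (hc.pow_left n).eq]

lemma D0_comm_Dj {j : Fin 4} (hj : j ≠ 0) : Dop 0 * Dop j = Dop j * Dop 0 := by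
  apply end_ext; intro m
  rw [Module.End.mul_apply, Module.End.mul_apply, Dop_monomial, Dop_monomial,
    Dop_monomial, Dop_monomial]
  rw [tsub_tsub, tsub_tsub, add_comm (Finsupp.single j 1)]
  congr 1
  simp [Finsupp.tsub_apply, Finsupp.single_apply, hj, Ne.symm hj, mul_comm]

lemma D0_comm_Xj {j : Fin 4} (hj : j ≠ 0) : Dop 0 * Xop j = Xop j * Dop 0 := by
  apply LinearMap.ext; intro p
  simp [Dop, Xop, Module.End.mul_apply, pderiv_mul, pderiv_X_of_ne hj]

lemma Dop_comm_opOf (h : ℂ) (g : PowerSeries ℂ) {j : Fin 4} (hj : j ≠ 0) :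
    opOf h g * Dop j = Dop j * opOf h g := by
  apply opOf_comm
  · exact D0_comm_Dj hj
  · intro m
    exact ⟨m - Finsupp.single j 1, (m j : ℂ), by rw [Dop_monomial, one_mul], by
      rw [Finsupp.tsub_apply, Finsupp.single_apply, if_neg hj]; omega⟩

lemma Xop_comm_opOf (h : ℂ) (g : PowerSeries ℂ) {j : Fin 4} (hj : j ≠ 0) :
    opOf h g * Xop j = Xop j * opOf h g := by
  apply opOf_comm
  · exact D0_comm_Xj hj
  · intro m
    refine ⟨m + Finsupp.single j 1, 1, Xop_monomial j m 1, ?_⟩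
    rw [Finsupp.add_apply, Finsupp.single_apply, if_neg hj]; omega

/-- coefficient sequence of `opOf`. -/
def cgF (h : ℂ) (g : PowerSeries ℂ) (n : ℕ) : ℂ :=
  PowerSeries.coeff n g * (Complex.I * h) ^ n

lemma opOf_eqc (h : ℂ) (g : PowerSeries ℂ) : opOf h g = seriesOp (cgF h g) := rfl

lemma Dpow_X0 (n : ℕ) (p : MvPolynomial (Fin 4) ℂ) :
    (Dop 0 ^ (n + 1)) (X 0 * p)
      = X 0 * ((Dop 0 ^ (n + 1)) p) + ((n : ℂ) + 1) • (Dop 0 ^ n) p := by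
  induction n with
  | zero =>
    simp only [pow_one, pow_zero, Module.End.one_apply, Nat.cast_zero, zero_add, one_smul]
    simp [Dop, pderiv_mul, pderiv_X_self]
  | succ n ih =>
    conv_lhs => rw [pow_succ' (Dop 0) (n + 1)]
    rw [Module.End.mul_apply, ih, map_add, map_smul]
    have hD : ∀ r : MvPolynomial (Fin 4) ℂ, Dop 0 (X 0 * r) = r + X 0 * Dop 0 r := by
      intro r
      show pderiv 0 (X 0 * r) = r + X 0 * pderiv 0 r
      rw [pderiv_mul, pderiv_X_self]
      ring
    rw [hD]
    have h1 : ∀ k : ℕ, Dop 0 ((Dop 0 ^ k) p) = (Dop 0 ^ (k + 1)) p := by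
      intro k; rw [pow_succ' (Dop 0) k, Module.End.mul_apply]
    rw [h1, h1]
    match_scalars <;> ring

lemma opOf_X0 (h : ℂ) (g : PowerSeries ℂ) :
    opOf h g * Xop 0 = Xop 0 * opOf h g
      + (Complex.I * h) • opOf h (PowerSeries.derivative ℂ g) := by
  apply end_ext; intro m
  have hXapp : ∀ p : MvPolynomial (Fin 4) ℂ, Xop 0 p = X 0 * p := by
    intro p; rw [Xop, LinearMap.mulLeft_apply]
  have hXmono : (monomial (m + Finsupp.single 0 1) (1 : ℂ)) = X 0 * monomial m 1 := by
    rw [← Xop_monomial, hXapp]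
  have e0 : ((m + Finsupp.single 0 1 : Fin 4 →₀ ℕ) 0) = m 0 + 1 := by simp
  have h1 : (opOf h g * Xop 0) (monomial m 1)
      = (∑ n ∈ Finset.range (m 0 + 1),
            cgF h g (n + 1) • (X 0 * ((Dop 0 ^ (n + 1)) (monomial m 1)))
          + cgF h g 0 • (X 0 * monomial m 1))
        + ∑ n ∈ Finset.range (m 0 + 1),
            (cgF h g (n + 1) * ((n : ℂ) + 1)) • ((Dop 0 ^ n) (monomial m 1)) := by
    rw [Module.End.mul_apply, Xop_monomial, opOf_eqc, seriesOp_apply, e0,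
      Finset.sum_range_succ', hXmono]
    simp only [Dpow_X0, smul_add, Finset.sum_add_distrib, smul_smul, pow_zero,
      Module.End.one_apply]
    abel
  have hA : Xop 0 (opOf h g (monomial m 1))
      = ∑ n ∈ Finset.range (m 0 + 1),
          cgF h g (n + 1) • (X 0 * ((Dop 0 ^ (n + 1)) (monomial m 1)))
        + cgF h g 0 • (X 0 * monomial m 1) := by
    rw [opOf_eqc, seriesOp_apply_of_le _ m 1 (Nat.le_succ (m 0)), hXapp, Finset.mul_sum,
      Finset.sum_range_succ']
    congr 1
    · exact Finset.sum_congr rfl fun n _ => by rw [mul_smul_comm]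
    · rw [mul_smul_comm, pow_zero, Module.End.one_apply]
  have hB : (Complex.I * h) • opOf h (PowerSeries.derivative ℂ g) (monomial m 1)
      = ∑ n ∈ Finset.range (m 0 + 1),
          (cgF h g (n + 1) * ((n : ℂ) + 1)) • ((Dop 0 ^ n) (monomial m 1)) := by
    rw [opOf_eqc, seriesOp_apply, Finset.smul_sum]
    refine Finset.sum_congr rfl fun n _ => ?_
    rw [smul_smul]
    congr 1
    simp only [cgF, PowerSeries.coeff_derivative]
    ring_nf
  rw [h1, LinearMap.add_apply, Module.End.mul_apply, LinearMap.smul_apply, hA, hB]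

lemma Xop_comm (a b : Fin 4) : Xop a * Xop b = Xop b * Xop a := by
  apply LinearMap.ext; intro p
  simp only [Xop, Module.End.mul_apply, LinearMap.mulLeft_apply]
  ring

lemma Dop_Xop_ne {k j : Fin 4} (hkj : k ≠ j) : Dop k * Xop j = Xop j * Dop k := by
  apply LinearMap.ext; intro p
  simp [Dop, Xop, Module.End.mul_apply, pderiv_mul, pderiv_X_of_ne (Ne.symm hkj)]

lemma Dop_Xop_self (k : Fin 4) : Dop k * Xop k = Xop k * Dop k + 1 := by
  apply LinearMap.ext; intro p
  simp only [Dop, Xop, Module.End.mul_apply, LinearMap.add_apply, Module.End.one_apply,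
    LinearMap.mulLeft_apply, Derivation.coeFn_coe]
  rw [pderiv_mul, pderiv_X_self]
  ring

/-- The general noncovariant family of Heisenberg realizations of κ-Minkowski spacetime:
if `ψ, φ, γ ∈ ℂ[[t]]` satisfy `γ·φ = φ + φ′·ψ` then, with `A_op := ih∂₀`,
`x̂^j := x^j∘φ(A_op)` and `x̂⁰ := x⁰∘ψ(A_op) + ih·(Σ_{k=1}^{3} x^k∘∂_k)∘γ(A_op)`
satisfy `[x̂⁰, x̂^j] = ih·x̂^j` and `[x̂^j, x̂^k] = 0`. -/
theorem noncovariant_realization_kappa_minkowski (ψ φ γ : PowerSeries ℂ) (h : ℂ)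
    (hcomp : γ * φ = φ + PowerSeries.derivative ℂ φ * ψ) :
    (∀ j ∈ ({1, 2, 3} : Finset (Fin 4)),
      (Xop 0 * opOf h ψ
          + (Complex.I * h) • ((∑ k ∈ ({1, 2, 3} : Finset (Fin 4)), Xop k * Dop k) * opOf h γ))
          * (Xop j * opOf h φ)
        - (Xop j * opOf h φ)
          * (Xop 0 * opOf h ψ
          + (Complex.I * h) • ((∑ k ∈ ({1, 2, 3} : Finset (Fin 4)), Xop k * Dop k) * opOf h γ))
        = (Complex.I * h) • (Xop j * opOf h φ)) ∧
    (∀ j ∈ ({1, 2, 3} : Finset (Fin 4)), ∀ k ∈ ({1, 2, 3} : Finset (Fin 4)),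
      (Xop j * opOf h φ) * (Xop k * opOf h φ)
        - (Xop k * opOf h φ) * (Xop j * opOf h φ) = 0) := by
  classical
  constructor
  · intro j hj
    have hj0 : j ≠ 0 := by fin_cases hj <;> decide
    set Dt := ∑ k ∈ ({1, 2, 3} : Finset (Fin 4)), Xop k * Dop k with hDtdef
    have comm1 : ∀ g : PowerSeries ℂ, opOf h g * Xop j = Xop j * opOf h g :=
      fun g => Xop_comm_opOf h g hj0
    have comm1' : ∀ (g : PowerSeries ℂ) (Z : Module.End ℂ (MvPolynomial (Fin 4) ℂ)),
        opOf h g * (Xop j * Z) = Xop j * (opOf h g * Z) := by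
      intro g Z; rw [← mul_assoc, comm1, mul_assoc]
    have commDt : ∀ g : PowerSeries ℂ, opOf h g * Dt = Dt * opOf h g := by
      intro g
      rw [hDtdef, Finset.mul_sum, Finset.sum_mul]
      refine Finset.sum_congr rfl fun k hk => ?_
      have hk0 : k ≠ 0 := by fin_cases hk <;> decide
      rw [← mul_assoc, Xop_comm_opOf h g hk0, mul_assoc, Dop_comm_opOf h g hk0, ← mul_assoc]
    have commDt' : ∀ (g : PowerSeries ℂ) (Z : Module.End ℂ (MvPolynomial (Fin 4) ℂ)),
        opOf h g * (Dt * Z) = Dt * (opOf h g * Z) := by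
      intro g Z; rw [← mul_assoc, commDt, mul_assoc]
    have hXX0' : ∀ Z : Module.End ℂ (MvPolynomial (Fin 4) ℂ),
        Xop 0 * (Xop j * Z) = Xop j * (Xop 0 * Z) := by
      intro Z; rw [← mul_assoc, Xop_comm, mul_assoc]
    have key_k : ∀ k ∈ ({1, 2, 3} : Finset (Fin 4)), (Xop k * Dop k) * Xop j
        = Xop j * (Xop k * Dop k) + (if k = j then Xop j else 0) := by
      intro k _
      by_cases hkj : k = j
      · subst hkj
        rw [if_pos rfl, mul_assoc, Dop_Xop_self, mul_add, mul_one]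
      · rw [if_neg hkj, add_zero, mul_assoc, Dop_Xop_ne hkj, ← mul_assoc, Xop_comm,
          mul_assoc]
    have hDtX : Dt * Xop j = Xop j * Dt + Xop j := by
      rw [hDtdef, Finset.sum_mul, Finset.sum_congr rfl key_k, Finset.sum_add_distrib,
        Finset.sum_ite_eq' ({1, 2, 3} : Finset (Fin 4)) j (fun _ => Xop j), if_pos hj,
        Finset.mul_sum]
    have hDtX' : ∀ Z : Module.End ℂ (MvPolynomial (Fin 4) ℂ),
        Dt * (Xop j * Z) = Xop j * (Dt * Z) + Xop j * Z := by
      intro Z; rw [← mul_assoc, hDtX, add_mul, mul_assoc]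
    have X0rel' : ∀ (g : PowerSeries ℂ) (Z : Module.End ℂ (MvPolynomial (Fin 4) ℂ)),
        opOf h g * (Xop 0 * Z) = Xop 0 * (opOf h g * Z)
          + (Complex.I * h) • (opOf h (PowerSeries.derivative ℂ g) * Z) := by
      intro g Z
      rw [← mul_assoc, opOf_X0, add_mul, smul_mul_assoc, mul_assoc]
    have e1 : (Xop 0 * opOf h ψ) * (Xop j * opOf h φ)
        = Xop j * (Xop 0 * opOf h (ψ * φ)) := by
      rw [mul_assoc, comm1' ψ, hXX0', ← opOf_mul]
    have e2 : (Dt * opOf h γ) * (Xop j * opOf h φ)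
        = Xop j * (Dt * opOf h (γ * φ)) + Xop j * opOf h (γ * φ) := by
      rw [mul_assoc, comm1' γ, hDtX']
      simp only [← opOf_mul]
    have e3 : (Xop j * opOf h φ) * (Xop 0 * opOf h ψ)
        = Xop j * (Xop 0 * opOf h (φ * ψ))
          + (Complex.I * h) • (Xop j * opOf h (PowerSeries.derivative ℂ φ * ψ)) := by
      rw [mul_assoc, X0rel' φ, mul_add, mul_smul_comm]
      simp only [← opOf_mul]
    have e4 : (Xop j * opOf h φ) * (Dt * opOf h γ)
        = Xop j * (Dt * opOf h (φ * γ)) := by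
      rw [mul_assoc, commDt' φ, ← opOf_mul]
    have hγφ : opOf h (γ * φ)
        = opOf h φ + opOf h (PowerSeries.derivative ℂ φ * ψ) := by
      rw [hcomp, opOf_add]
    rw [add_mul, mul_add, smul_mul_assoc, mul_smul_comm, e1, e2, e3, e4,
      mul_comm φ ψ, mul_comm φ γ, hγφ]
    simp only [mul_add, smul_add, add_mul]
    abel
  · intro j hj k hk
    have hj0 : j ≠ 0 := by fin_cases hj <;> decide
    have hk0 : k ≠ 0 := by fin_cases hk <;> decide
    have swap : ∀ a b : Fin 4, b ≠ 0 →
        (Xop a * opOf h φ) * (Xop b * opOf h φ)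
          = Xop a * (Xop b * (opOf h φ * opOf h φ)) := by
      intro a b hb0
      rw [mul_assoc, ← mul_assoc (opOf h φ), Xop_comm_opOf h φ hb0]
      simp only [mul_assoc]
    rw [swap j k hk0, swap k j hj0,
      show Xop j * (Xop k * (opOf h φ * opOf h φ))
          = Xop k * (Xop j * (opOf h φ * opOf h φ)) from by
        rw [← mul_assoc, Xop_comm j k, mul_assoc],
      sub_self]

end
end

section
/- Fix a = (a⁰,a¹,a²,a³) ∈ ℂ⁴ and κ ∈ ℂ with κ ≠ 0. On A = ℂ[x⁰,x¹,x²,x³] define the operators X̂^μ := x^μ + (i a^μ/κ)·Σ_{λ=0}^{3} x^λ∘∂_λ (equivalently X̂^μ = x^μ − (a^μ/κ) x^λ p_λ with p_λ = −i∂_λ). Then for all μ, ν ∈ {0,1,2,3}: [X̂^μ, X̂^ν] = (i/κ)(a^μ X̂^ν − a^ν X̂^μ). -/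
open MvPolynomial

noncomputable section

/-- The Magueijo–Smolin operator `X̂^μ := x^μ + (i a^μ/κ)·Σ_{λ} x^λ∘∂_λ`. -/
def XhatMS (a : Fin 4 → ℂ) (κ : ℂ) (μ : Fin 4) : Module.End ℂ (MvPolynomial (Fin 4) ℂ) :=
  Xop μ + (Complex.I * a μ / κ) • ∑ lam : Fin 4, Xop lam * Dop lam


lemma DX (lam μ : Fin 4) :
    Dop lam * Xop μ = Xop μ * Dop lam + if lam = μ then 1 else 0 := by
  ext p
  simp [Dop, Xop, LinearMap.mulLeft, Module.End.mul_apply, pderiv_mul, pderiv_X, Pi.single_apply]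
  by_cases h : lam = μ <;> simp [h, eq_comm]

lemma XX (μ ν : Fin 4) : Xop μ * Xop ν = Xop ν * Xop μ := by
  ext p
  simp [Xop, LinearMap.mulLeft, Module.End.mul_apply, mul_left_comm]

lemma EX (μ : Fin 4) :
    (∑ lam : Fin 4, Xop lam * Dop lam) * Xop μ
      = Xop μ * (∑ lam : Fin 4, Xop lam * Dop lam) + Xop μ := by
  rw [Finset.sum_mul, Finset.mul_sum]
  have : ∀ lam : Fin 4, Xop lam * Dop lam * Xop μ
      = Xop μ * (Xop lam * Dop lam) + if lam = μ then Xop lam else 0 := by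
    intro lam
    rw [mul_assoc, DX, mul_add, ← mul_assoc, XX, mul_assoc]
    by_cases h : lam = μ <;> simp [h, eq_comm]
  simp only [this, Finset.sum_add_distrib]
  congr 1
  simp

/-- The Magueijo–Smolin realization of the generalized κ-Minkowski relations:
`[X̂^μ, X̂^ν] = (i/κ)(a^μ X̂^ν − a^ν X̂^μ)` for an arbitrary fixed four-vector `a`. -/
theorem magueijo_smolin_realization (a : Fin 4 → ℂ) (κ : ℂ) (hκ : κ ≠ 0) :
    ∀ μ ν : Fin 4,
      XhatMS a κ μ * XhatMS a κ ν - XhatMS a κ ν * XhatMS a κ μ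
        = (Complex.I / κ) • (a μ • XhatMS a κ ν - a ν • XhatMS a κ μ) := by
  intro μ ν
  simp only [XhatMS, mul_add, add_mul, smul_mul_assoc, mul_smul_comm, EX, XX ν μ]
  match_scalars <;> field_simp <;> ring

end
end
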